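/- Let B ⊆ S^n be a bounded set of symmetric matrices such that for every distinct pair A, B ∈ B, the set J_0(B) = {X ∈ S^n_+ : ⟨B,X⟩ = 0} is contained in J_+(A) = {X ∈ S^n_+ : ⟨A,X⟩ ≥ 0}. Then co(Γ^n ∩ J_+(B)) = J_+(B), where J_+(B) = {X ∈ S^n_+ : ⟨B,X⟩ ≥ 0 for all B ∈ B}. -/

import Mathlib

open Matrix

/-- Γ^n = {x xᵀ : x ∈ ℝ^n}. -/
def Gamma (n : ℕ) : Set (Matrix (Fin n) (Fin n) ℝ) :=
  {X | ∃ x : Fin n → ℝ, X = vecMulVec x x}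

/-- J_+(B) = {X ∈ S^n_+ : ⟨B,X⟩ ≥ 0}. -/
def Jp {n : ℕ} (B : Matrix (Fin n) (Fin n) ℝ) : Set (Matrix (Fin n) (Fin n) ℝ) :=
  {X | X.PosSemidef ∧ 0 ≤ (B * X).trace}

/-- J_0(B) = {X ∈ S^n_+ : ⟨B,X⟩ = 0}. -/
def J0 {n : ℕ} (B : Matrix (Fin n) (Fin n) ℝ) : Set (Matrix (Fin n) (Fin n) ℝ) :=
  {X | X.PosSemidef ∧ (B * X).trace = 0}

/-- J_+(𝓑) = {X ∈ S^n_+ : ⟨B,X⟩ ≥ 0 for all B ∈ 𝓑}. -/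
def JpFam {n : ℕ} (𝓑 : Set (Matrix (Fin n) (Fin n) ℝ)) : Set (Matrix (Fin n) (Fin n) ℝ) :=
  {X | X.PosSemidef ∧ ∀ B ∈ 𝓑, 0 ≤ (B * X).trace}

open Matrix

variable {n : ℕ}

lemma psd_vmv (x : Fin n → ℝ) : (vecMulVec x x).PosSemidef := by
  refine Matrix.PosSemidef.of_dotProduct_mulVec_nonneg ?_ ?_
  · ext i j
    simp [Matrix.conjTranspose_apply, vecMulVec_apply, mul_comm]
  · intro v
    have h2 : (star v) ⬝ᵥ ((vecMulVec x x) *ᵥ v) = (x ⬝ᵥ v) * (x ⬝ᵥ v) := by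
      simp only [star_trivial, dotProduct, Matrix.mulVec, vecMulVec_apply,
        Finset.sum_mul, Finset.mul_sum]
      exact Finset.sum_congr rfl fun i _ => Finset.sum_congr rfl fun j _ => by ring
    rw [h2]
    exact mul_self_nonneg _

lemma smul_vmv {c : ℝ} (hc : 0 ≤ c) (x : Fin n → ℝ) :
    c • vecMulVec x x = vecMulVec (Real.sqrt c • x) (Real.sqrt c • x) := by
  have h2 : Real.sqrt c * Real.sqrt c = c := Real.mul_self_sqrt hc
  ext i j
  simp only [Matrix.smul_apply, vecMulVec_apply, Pi.smul_apply, smul_eq_mul]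
  linear_combination (-(x i * x j)) * h2

lemma psd_smul_vmv {c : ℝ} (hc : 0 ≤ c) (x : Fin n → ℝ) :
    (c • vecMulVec x x).PosSemidef := by
  rw [smul_vmv hc]; exact psd_vmv _

lemma psd_sum {ι : Type*} (s : Finset ι) (v : ι → Fin n → ℝ) :
    (∑ i ∈ s, vecMulVec (v i) (v i)).PosSemidef :=
  Finset.sum_induction _ _ (fun _ _ ha hb => ha.add hb) Matrix.PosSemidef.zero
    (fun i _ => psd_vmv (v i))

lemma psd_repr {X : Matrix (Fin n) (Fin n) ℝ} (hX : X.PosSemidef) :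
    ∃ v : Fin n → Fin n → ℝ, X = ∑ i, vecMulVec (v i) (v i) := by
  obtain ⟨A, hA⟩ : ∃ A : Matrix (Fin n) (Fin n) ℝ, X = Aᴴ * A := by
    open scoped MatrixOrder in
    obtain ⟨A, hA, -, h⟩ := CFC.exists_sqrt_of_isSelfAdjoint_of_quasispectrumRestricts
      hX.isHermitian (QuasispectrumRestricts.nnreal_of_nonneg hX.nonneg)
    exact ⟨A, by rw [← h]; exact congrArg (· * A) hA.star_eq.symm⟩
  refine ⟨fun i => A i, ?_⟩
  rw [hA]
  ext i j
  simp [Matrix.mul_apply, Matrix.conjTranspose_apply, vecMulVec_apply, Matrix.sum_apply]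

lemma tr_mul_smul (B X : Matrix (Fin n) (Fin n) ℝ) (c : ℝ) :
    (B * (c • X)).trace = c * (B * X).trace := by
  rw [Matrix.mul_smul, Matrix.trace_smul, smul_eq_mul]

lemma tr_mul_add (B X Y : Matrix (Fin n) (Fin n) ℝ) :
    (B * (X + Y)).trace = (B * X).trace + (B * Y).trace := by
  rw [Matrix.mul_add, Matrix.trace_add]

lemma tr_mul_sum {ι : Type*} (B : Matrix (Fin n) (Fin n) ℝ) (s : Finset ι)
    (f : ι → Matrix (Fin n) (Fin n) ℝ) :
    (B * ∑ i ∈ s, f i).trace = ∑ i ∈ s, (B * f i).trace := by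
  rw [Matrix.mul_sum, Matrix.trace_sum]

lemma vmv_expand (a b : Fin n → ℝ) (t : ℝ) :
    vecMulVec (a + t • b) (a + t • b) =
      vecMulVec a a + t • (vecMulVec a b + vecMulVec b a) + (t ^ 2) • vecMulVec b b := by
  ext i j
  simp only [vecMulVec_apply, Matrix.add_apply, Matrix.smul_apply, Pi.add_apply,
    Pi.smul_apply, smul_eq_mul]
  ring

lemma quad_root {qa qb β : ℝ} (ha : 0 < qa) (hb : qb < 0) :
    ∃ t : ℝ, qa + t * β + t ^ 2 * qb = 0 := by
  refine ⟨(-β - Real.sqrt (β ^ 2 - 4 * qa * qb)) / (2 * qb), ?_⟩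
  have hd : Real.sqrt (β ^ 2 - 4 * qa * qb) ^ 2 = β ^ 2 - 4 * qa * qb :=
    Real.sq_sqrt (by nlinarith)
  have hqb : qb ≠ 0 := ne_of_lt hb
  generalize Real.sqrt (β ^ 2 - 4 * qa * qb) = r at hd ⊢
  field_simp
  nlinarith [hd]

lemma rot_identity (a b : Fin n → ℝ) {t s : ℝ} (hs : s ^ 2 * (1 + t ^ 2) = 1) :
    vecMulVec (s • (a + t • b)) (s • (a + t • b)) +
      vecMulVec (s • (b - t • a)) (s • (b - t • a)) =
      vecMulVec a a + vecMulVec b b := by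
  ext i j
  simp only [vecMulVec_apply, Matrix.add_apply, Pi.add_apply, Pi.sub_apply,
    Pi.smul_apply, smul_eq_mul]
  linear_combination (a i * a j + b i * b j) * hs

lemma rotate (B : Matrix (Fin n) (Fin n) ℝ) (a b : Fin n → ℝ)
    (ha : 0 < (B * vecMulVec a a).trace) (hb : (B * vecMulVec b b).trace < 0) :
    ∃ y z : Fin n → ℝ,
      vecMulVec y y + vecMulVec z z = vecMulVec a a + vecMulVec b b ∧
      (B * vecMulVec y y).trace = 0 := by
  obtain ⟨t, ht⟩ := quad_root (β := (B * (vecMulVec a b + vecMulVec b a)).trace) ha hb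
  set s := Real.sqrt ((1 + t ^ 2)⁻¹) with hsdef
  have h1t : (0:ℝ) < 1 + t ^ 2 := by positivity
  have hs : s ^ 2 * (1 + t ^ 2) = 1 := by
    rw [hsdef, Real.sq_sqrt (by positivity)]
    field_simp
  refine ⟨s • (a + t • b), s • (b - t • a), rot_identity a b hs, ?_⟩
  have h1 : vecMulVec (s • (a + t • b)) (s • (a + t • b)) =
      (s ^ 2) • vecMulVec (a + t • b) (a + t • b) := by
    ext i j
    simp only [vecMulVec_apply, Matrix.smul_apply, Pi.smul_apply, smul_eq_mul]
    ring
  rw [h1, tr_mul_smul, vmv_expand, tr_mul_add, tr_mul_add, tr_mul_smul, tr_mul_smul]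
  linear_combination (s ^ 2) * ht
lemma zero_decomp (B : Matrix (Fin n) (Fin n) ℝ) (k : ℕ) :
    ∀ v : Fin n → Fin n → ℝ,
    (Finset.univ.filter (fun i => (B * vecMulVec (v i) (v i)).trace ≠ 0)).card ≤ k →
    (B * (∑ i, vecMulVec (v i) (v i))).trace = 0 →
    ∃ y : Fin n → Fin n → ℝ,
      (∑ i, vecMulVec (y i) (y i)) = ∑ i, vecMulVec (v i) (v i) ∧
      ∀ i, (B * vecMulVec (y i) (y i)).trace = 0 := by
  induction k with
  | zero =>
    intro v hcard _
    refine ⟨v, rfl, fun i => ?_⟩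
    by_contra hne
    have hi : i ∈ Finset.univ.filter (fun i => (B * vecMulVec (v i) (v i)).trace ≠ 0) :=
      Finset.mem_filter.mpr ⟨Finset.mem_univ _, hne⟩
    have := Finset.card_pos.mpr ⟨i, hi⟩
    omega
  | succ k ih =>
    intro v hcard htr
    by_cases hall : ∀ i, (B * vecMulVec (v i) (v i)).trace = 0
    · exact ⟨v, rfl, hall⟩
    push_neg at hall
    obtain ⟨i0, hi0⟩ := hall
    have hsumq : ∑ i, (B * vecMulVec (v i) (v i)).trace = 0 := by
      rw [← tr_mul_sum]; exact htr
    have hex : ∃ p, 0 < (B * vecMulVec (v p) (v p)).trace := by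
      by_contra h
      push_neg at h
      have hlt : (B * vecMulVec (v i0) (v i0)).trace < 0 := lt_of_le_of_ne (h i0) hi0
      have h1 : ∑ i ∈ Finset.univ.erase i0, (B * vecMulVec (v i) (v i)).trace ≤ 0 :=
        Finset.sum_nonpos fun i _ => h i
      have h2 := Finset.sum_erase_add Finset.univ
        (fun i => (B * vecMulVec (v i) (v i)).trace) (Finset.mem_univ i0)
      rw [hsumq] at h2
      linarith
    have hex' : ∃ m, (B * vecMulVec (v m) (v m)).trace < 0 := by
      by_contra h
      push_neg at h
      obtain ⟨p, hp⟩ := hex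
      have h1 : ∑ i ∈ Finset.univ.erase p, (B * vecMulVec (v i) (v i)).trace ≥ 0 :=
        Finset.sum_nonneg fun i _ => h i
      have h2 := Finset.sum_erase_add Finset.univ
        (fun i => (B * vecMulVec (v i) (v i)).trace) (Finset.mem_univ p)
      rw [hsumq] at h2
      linarith
    obtain ⟨p, hp⟩ := hex
    obtain ⟨m, hm⟩ := hex'
    have hpm : p ≠ m := by rintro rfl; linarith
    obtain ⟨y, z, hyz, hy0⟩ := rotate B (v p) (v m) hp hm
    set v' : Fin n → Fin n → ℝ := Function.update (Function.update v p y) m z with hv'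
    have hvp : v' p = y := by
      rw [hv', Function.update_of_ne hpm, Function.update_self]
    have hvm : v' m = z := by rw [hv', Function.update_self]
    have hvo : ∀ i, i ≠ p → i ≠ m → v' i = v i := by
      intro i h1 h2
      rw [hv', Function.update_of_ne h2, Function.update_of_ne h1]
    have hsum' : ∑ i, vecMulVec (v' i) (v' i) = ∑ i, vecMulVec (v i) (v i) := by
      have e1 : (fun i => vecMulVec (v' i) (v' i)) =
          Function.update (Function.update (fun i => vecMulVec (v i) (v i)) p
            (vecMulVec y y)) m (vecMulVec z z) := by
        funext j
        rcases eq_or_ne j m with rfl | hjm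
        · rw [hvm, Function.update_self]
        rcases eq_or_ne j p with rfl | hjp
        · rw [hvp, Function.update_of_ne hjm, Function.update_self]
        · rw [hvo j hjp hjm, Function.update_of_ne hjm, Function.update_of_ne hjp]
      rw [e1]
      rw [Finset.sum_update_of_mem (Finset.mem_univ m)]
      rw [Finset.sum_update_of_mem (by simp [hpm] : p ∈ Finset.univ \ {m})]
      simp only [← Finset.erase_eq]
      have h2 := Finset.sum_erase_add Finset.univ
        (fun i => vecMulVec (v i) (v i)) (Finset.mem_univ m)
      have h3 := Finset.sum_erase_add (Finset.univ.erase m)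
        (fun i => vecMulVec (v i) (v i)) (Finset.mem_erase.mpr ⟨hpm, Finset.mem_univ p⟩)
      rw [← h2, ← h3]
      rw [show vecMulVec z z + (vecMulVec y y +
          ∑ i ∈ (Finset.univ.erase m).erase p, vecMulVec (v i) (v i)) =
          (vecMulVec y y + vecMulVec z z) +
          ∑ i ∈ (Finset.univ.erase m).erase p, vecMulVec (v i) (v i) from by abel, hyz]
      abel
    have hpfil : p ∈ Finset.univ.filter
        (fun i => (B * vecMulVec (v i) (v i)).trace ≠ 0) :=
      Finset.mem_filter.mpr ⟨Finset.mem_univ _, ne_of_gt hp⟩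
    have hsubset : Finset.univ.filter
        (fun i => (B * vecMulVec (v' i) (v' i)).trace ≠ 0) ⊆
        (Finset.univ.filter (fun i => (B * vecMulVec (v i) (v i)).trace ≠ 0)).erase p := by
      intro i hi
      have hi' := (Finset.mem_filter.mp hi).2
      rcases eq_or_ne i p with rfl | hip
      · rw [hvp] at hi'; exact absurd hy0 hi'
      rcases eq_or_ne i m with rfl | him
      · exact Finset.mem_erase.mpr ⟨hip,
          Finset.mem_filter.mpr ⟨Finset.mem_univ _, ne_of_lt hm⟩⟩
      · rw [hvo i hip him] at hi'
        exact Finset.mem_erase.mpr ⟨hip, Finset.mem_filter.mpr ⟨Finset.mem_univ _, hi'⟩⟩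
    have hcard' : (Finset.univ.filter
        (fun i => (B * vecMulVec (v' i) (v' i)).trace ≠ 0)).card ≤ k := by
      have h1 := Finset.card_le_card hsubset
      have h2 := Finset.card_erase_of_mem hpfil
      omega
    obtain ⟨w, hw1, hw2⟩ := ih v' hcard' (by rw [hsum']; exact htr)
    exact ⟨w, hw1.trans hsum', hw2⟩
open scoped Pointwise

section Hull

variable {𝓑 : Set (Matrix (Fin n) (Fin n) ℝ)}

lemma psd_smul {c : ℝ} (hc : 0 ≤ c) {M : Matrix (Fin n) (Fin n) ℝ}
    (h : M.PosSemidef) : (c • M).PosSemidef := by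
  refine Matrix.PosSemidef.of_dotProduct_mulVec_nonneg ?_ ?_
  · show (c • M)ᴴ = c • M
    rw [Matrix.conjTranspose_smul, star_trivial, h.1]
  · intro x
    rw [Matrix.smul_mulVec, dotProduct_smul, smul_eq_mul]
    exact mul_nonneg hc (h.dotProduct_mulVec_nonneg x)

lemma S_zero : (0 : Matrix (Fin n) (Fin n) ℝ) ∈ Gamma n ∩ JpFam 𝓑 := by
  refine ⟨⟨0, ?_⟩, Matrix.PosSemidef.zero, fun B hB => by simp⟩
  ext i j
  simp [vecMulVec_apply]

lemma S_smul {c : ℝ} (hc : 0 ≤ c) {Z : Matrix (Fin n) (Fin n) ℝ}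
    (hZ : Z ∈ Gamma n ∩ JpFam 𝓑) : c • Z ∈ Gamma n ∩ JpFam 𝓑 := by
  obtain ⟨⟨x, rfl⟩, hpsd, htr⟩ := hZ
  refine ⟨⟨Real.sqrt c • x, smul_vmv hc x⟩, psd_smul_vmv hc x, fun B hB => ?_⟩
  rw [tr_mul_smul]
  exact mul_nonneg hc (htr B hB)

lemma C_smul {c : ℝ} (hc : 0 ≤ c) {Y : Matrix (Fin n) (Fin n) ℝ}
    (hY : Y ∈ convexHull ℝ (Gamma n ∩ JpFam 𝓑)) :
    c • Y ∈ convexHull ℝ (Gamma n ∩ JpFam 𝓑) := by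
  have h1 : c • Y ∈ c • convexHull ℝ (Gamma n ∩ JpFam 𝓑) := Set.smul_mem_smul_set hY
  rw [← convexHull_smul] at h1
  refine convexHull_mono ?_ h1
  rintro z ⟨w, hw, rfl⟩
  exact S_smul hc hw

lemma C_add {Y1 Y2 : Matrix (Fin n) (Fin n) ℝ}
    (h1 : Y1 ∈ convexHull ℝ (Gamma n ∩ JpFam 𝓑))
    (h2 : Y2 ∈ convexHull ℝ (Gamma n ∩ JpFam 𝓑)) :
    Y1 + Y2 ∈ convexHull ℝ (Gamma n ∩ JpFam 𝓑) := by
  have hmid : (1/2 : ℝ) • Y1 + (1/2 : ℝ) • Y2 ∈ convexHull ℝ (Gamma n ∩ JpFam 𝓑) :=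
    (convex_convexHull ℝ _) h1 h2 (by norm_num) (by norm_num) (by norm_num)
  have heq : Y1 + Y2 = (2:ℝ) • ((1/2 : ℝ) • Y1 + (1/2 : ℝ) • Y2) := by module
  rw [heq]
  exact C_smul (by norm_num) hmid

lemma C_sum {ι : Type*} (s : Finset ι) (f : ι → Matrix (Fin n) (Fin n) ℝ)
    (h : ∀ i ∈ s, f i ∈ convexHull ℝ (Gamma n ∩ JpFam 𝓑)) :
    (∑ i ∈ s, f i) ∈ convexHull ℝ (Gamma n ∩ JpFam 𝓑) :=
  Finset.sum_induction f _ (fun _ _ ha hb => C_add ha hb)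
    (subset_convexHull ℝ _ S_zero) h

lemma tight_mem (hcondB : ∀ A ∈ 𝓑, ∀ B ∈ 𝓑, A ≠ B → J0 B ⊆ Jp A)
    {X : Matrix (Fin n) (Fin n) ℝ} (hX : X.PosSemidef)
    {B0 : Matrix (Fin n) (Fin n) ℝ} (hB0 : B0 ∈ 𝓑)
    (htr : (B0 * X).trace = 0) : X ∈ convexHull ℝ (Gamma n ∩ JpFam 𝓑) := by
  obtain ⟨v, hv⟩ := psd_repr hX
  obtain ⟨y, hy1, hy2⟩ := zero_decomp B0
    (Finset.univ.filter (fun i => (B0 * vecMulVec (v i) (v i)).trace ≠ 0)).card v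
    le_rfl (by rw [← hv]; exact htr)
  rw [hv, ← hy1]
  refine C_sum _ _ fun i _ => subset_convexHull ℝ _ ⟨⟨y i, rfl⟩, psd_vmv _, fun A hA => ?_⟩
  by_cases hAB : A = B0
  · subst hAB
    rw [hy2 i]
  · exact (hcondB A hA B0 hB0 hAB ⟨psd_vmv _, hy2 i⟩).2

lemma combo1 {M : Type*} [AddCommGroup M] [Module ℝ M] (Y W : M) {t0 : ℝ}
    (h : (0:ℝ) < 1 + t0) :
    Y + W = (t0 / (1 + t0)) • Y + (1 / (1 + t0)) • (Y + W + t0 • W) := by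
  have hne : (1 + t0) ≠ 0 := ne_of_gt h
  match_scalars <;> (field_simp; try ring)

lemma combo2 {M : Type*} [AddCommGroup M] [Module ℝ M] (Y W : M) {t0 ρ : ℝ}
    (h : (0:ℝ) < t0 - ρ) :
    Y + W = (t0 / (t0 - ρ)) • (Y + (1 + ρ) • W) +
      (-ρ / (t0 - ρ)) • (Y + W + t0 • W) := by
  have hne : (t0 - ρ) ≠ 0 := ne_of_gt h
  match_scalars <;> (field_simp; try ring)

lemma main_mem (hcondB : ∀ A ∈ 𝓑, ∀ B ∈ 𝓑, A ≠ B → J0 B ⊆ Jp A)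
    (s : Finset (Fin n)) :
    ∀ v : Fin n → Fin n → ℝ,
      (∑ i ∈ s, vecMulVec (v i) (v i)) ∈ JpFam 𝓑 →
      (∑ i ∈ s, vecMulVec (v i) (v i)) ∈ convexHull ℝ (Gamma n ∩ JpFam 𝓑) := by
  induction s using Finset.strongInduction with
  | _ s ih =>
    intro v hX
    obtain ⟨hXpsd, hXtr⟩ := hX
    by_cases h0 : ∃ B ∈ 𝓑, (B * ∑ i ∈ s, vecMulVec (v i) (v i)).trace = 0
    · obtain ⟨B0, hB0, h⟩ := h0
      exact tight_mem hcondB hXpsd hB0 h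
    push_neg at h0
    have hpos : ∀ B ∈ 𝓑, 0 < (B * ∑ i ∈ s, vecMulVec (v i) (v i)).trace :=
      fun B hB => lt_of_le_of_ne (hXtr B hB) (Ne.symm (h0 B hB))
    by_cases hfeas : ∀ i ∈ s, vecMulVec (v i) (v i) ∈ JpFam 𝓑
    · exact C_sum _ _ fun i hi => subset_convexHull ℝ _ ⟨⟨v i, rfl⟩, hfeas i hi⟩
    push_neg at hfeas
    obtain ⟨i0, hi0s, hi0⟩ := hfeas
    have hB0ex : ∃ B0 ∈ 𝓑, (B0 * vecMulVec (v i0) (v i0)).trace < 0 := by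
      by_contra h
      push_neg at h
      exact hi0 ⟨psd_vmv _, h⟩
    obtain ⟨B0, hB0, hs0⟩ := hB0ex
    set W := vecMulVec (v i0) (v i0) with hW
    set Y := ∑ i ∈ s.erase i0, vecMulVec (v i) (v i) with hYdef
    have hXY : ∑ i ∈ s, vecMulVec (v i) (v i) = Y + W :=
      (Finset.sum_erase_add s _ hi0s).symm
    have hYpsd : Y.PosSemidef := psd_sum _ _
    have hc0 : 0 < (B0 * (Y + W)).trace := by rw [← hXY]; exact hpos B0 hB0
    have hs0ne : (B0 * W).trace ≠ 0 := ne_of_lt hs0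
    set t0 := (B0 * (Y + W)).trace / (-(B0 * W).trace) with ht0def
    have ht0 : 0 < t0 := div_pos hc0 (by linarith)
    have hWpsd : W.PosSemidef := psd_vmv _
    have hE2psd : (Y + W + t0 • W).PosSemidef :=
      (hYpsd.add hWpsd).add (psd_smul ht0.le hWpsd)
    have hE2tr : (B0 * (Y + W + t0 • W)).trace = 0 := by
      have hkey : t0 * (B0 * W).trace = -(B0 * (Y + W)).trace := by
        have hneg : -(B0 * W).trace ≠ 0 := neg_ne_zero.mpr hs0ne
        rw [ht0def, div_mul_eq_mul_div, div_eq_iff hneg]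
        ring
      rw [tr_mul_add, tr_mul_smul, hkey]
      ring
    have hE2 : Y + W + t0 • W ∈ convexHull ℝ (Gamma n ∩ JpFam 𝓑) :=
      tight_mem hcondB hE2psd hB0 hE2tr
    rw [hXY]
    by_cases hYfeas : Y ∈ JpFam 𝓑
    · have hYC : Y ∈ convexHull ℝ (Gamma n ∩ JpFam 𝓑) :=
        ih (s.erase i0) (Finset.erase_ssubset hi0s) v hYfeas
      have h1t0 : (0:ℝ) < 1 + t0 := by linarith
      rw [combo1 Y W h1t0]
      exact (convex_convexHull ℝ _) hYC hE2
        (div_nonneg ht0.le h1t0.le) (div_nonneg zero_le_one h1t0.le)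
        (by field_simp; try ring)
    · have hB1ex : ∃ B1 ∈ 𝓑, (B1 * Y).trace < 0 := by
        by_contra h
        push_neg at h
        exact hYfeas ⟨hYpsd, h⟩
      obtain ⟨B1, hB1, hY1⟩ := hB1ex
      have hc1 : 0 < (B1 * (Y + W)).trace := by rw [← hXY]; exact hpos B1 hB1
      have hcs : (B1 * (Y + W)).trace = (B1 * Y).trace + (B1 * W).trace := tr_mul_add _ _ _
      have hs1c : (B1 * (Y + W)).trace < (B1 * W).trace := by linarith
      have hs1pos : 0 < (B1 * W).trace := lt_trans hc1 hs1c
      set ρ := -(B1 * (Y + W)).trace / (B1 * W).trace with hρdef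
      have hρneg : ρ < 0 := div_neg_of_neg_of_pos (by linarith) hs1pos
      have hρgt : -1 < ρ := by
        rw [hρdef, neg_div]
        have : (B1 * (Y + W)).trace / (B1 * W).trace < 1 := (div_lt_one hs1pos).mpr hs1c
        linarith
      have hE1psd : (Y + (1 + ρ) • W).PosSemidef :=
        hYpsd.add (psd_smul (by linarith) hWpsd)
      have hE1tr : (B1 * (Y + (1 + ρ) • W)).trace = 0 := by
        have hkey : ρ * (B1 * W).trace = -(B1 * (Y + W)).trace := by
          rw [hρdef, div_mul_eq_mul_div, div_eq_iff (ne_of_gt hs1pos)]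
          try ring
        rw [tr_mul_add, tr_mul_smul]
        linear_combination hkey - hcs
      have hE1 : Y + (1 + ρ) • W ∈ convexHull ℝ (Gamma n ∩ JpFam 𝓑) :=
        tight_mem hcondB hE1psd hB1 hE1tr
      have hden : (0:ℝ) < t0 - ρ := by linarith
      rw [combo2 Y W hden]
      refine (convex_convexHull ℝ _) hE1 hE2
        (div_nonneg ht0.le hden.le) (div_nonneg (by linarith) hden.le) ?_
      field_simp
      try ring

end Hull

theorem stmt3 {n : ℕ} (𝓑 : Set (Matrix (Fin n) (Fin n) ℝ))
    (hsymm : ∀ B ∈ 𝓑, B.IsSymm)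
    (hbdd : ∃ r : ℝ, ∀ B ∈ 𝓑, ∀ i j, |B i j| ≤ r)
    (hcondB : ∀ A ∈ 𝓑, ∀ B ∈ 𝓑, A ≠ B → J0 B ⊆ Jp A) :
    convexHull ℝ (Gamma n ∩ JpFam 𝓑) = JpFam 𝓑 := by
  apply Set.Subset.antisymm
  · apply convexHull_min Set.inter_subset_right
    intro X hX Y hY a b ha hb hab
    obtain ⟨hX1, hX2⟩ := hX
    obtain ⟨hY1, hY2⟩ := hY
    refine ⟨(psd_smul ha hX1).add (psd_smul hb hY1), fun B hB => ?_⟩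
    rw [tr_mul_add, tr_mul_smul, tr_mul_smul]
    exact add_nonneg (mul_nonneg ha (hX2 B hB)) (mul_nonneg hb (hY2 B hB))
  · intro X hX
    obtain ⟨v, hv⟩ := psd_repr hX.1
    rw [hv]
    exact main_mem hcondB Finset.univ v (hv ▸ hX)
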